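/- Let X be a locally compact Hausdorff totally disconnected space with a continuous right action of a locally profinite group H, let V be a normal compact open subgroup of a compact open subgroup W of H, let R be an integral domain, and let φ : X → R be a locally constant compactly supported W-invariant function. Then there exists a locally constant compactly supported V-invariant function ψ : X → R with φ = Σ_{γ ∈ W/V} γ·ψ if and only if for every x in the support of φ, the value φ(x) lies in the ideal [V_x : V]·R, where V_x is the subgroup of W generated by V and the stabilizer of x in W. -/

import Mathlib

open Set

set_option maxHeartbeats 1000000

section Aux

variable {X H R : Type*} [TopologicalSpace X] [LocallyCompactSpace X] [T2Space X]
    [TotallyDisconnectedSpace X] [Group H] [CommRing R]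

/-- compact clopen set squeezed between a compact set and an open set. -/
lemma aux_exists_clopen {K Ω : Set X} (hK : IsCompact K) (hΩ : IsOpen Ω) (hKΩ : K ⊆ Ω) :
    ∃ A : Set X, IsCompact A ∧ IsClopen A ∧ K ⊆ A ∧ A ⊆ Ω := by
  -- point version
  have hpt : ∀ x ∈ K, ∃ A : Set X, IsCompact A ∧ IsClopen A ∧ x ∈ A ∧ A ⊆ Ω := by
    intro x hx
    obtain ⟨s, hs, hxs, hsΩ⟩ := exists_compact_subset hΩ (hKΩ hx)
    obtain ⟨A, hA, hxA, hAs⟩ :=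
      loc_compact_Haus_tot_disc_of_zero_dim.mem_nhds_iff.1
        (isOpen_interior.mem_nhds hxs)
    exact ⟨A, hs.of_isClosed_subset hA.1 (hAs.trans interior_subset),
      hA, hxA, (hAs.trans interior_subset).trans hsΩ⟩
  choose! A hAc hAcl hxA hAΩ using hpt
  obtain ⟨t, ht⟩ := hK.elim_finite_subcover (fun x : K => A x)
    (fun x => (hAcl x x.2).2) (fun x hx => mem_iUnion.2 ⟨⟨x, hx⟩, hxA x hx⟩)
  refine ⟨⋃ x ∈ t, A x, t.isCompact_biUnion (fun x _ => hAc x x.2), ?_, ?_, ?_⟩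
  · exact isClopen_biUnion_finset (fun x _ => hAcl x x.2)
  · intro z hz
    obtain ⟨i, hi, hzi⟩ := mem_iUnion₂.1 (ht hz)
    exact mem_biUnion hi hzi
  · exact iUnion₂_subset fun i _ => hAΩ i i.2

end Aux

section Trans
variable {H : Type*} [Group H] [TopologicalSpace H] [IsTopologicalGroup H]

set_option linter.unusedSectionVars false

/-- existence of a finite left transversal of an open subgroup inside a compact subgroup. -/
lemma aux_exists_transversal {V K : Subgroup H} (hVK : V ≤ K) (hKc : IsCompact (K : Set H))
    (hVo : IsOpen (V : Set H)) :
    ∃ E : Finset H, (E : Set H) ⊆ (K : Set H) ∧ ∀ g ∈ K, ∃! e, e ∈ E ∧ e⁻¹ * g ∈ V := by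
  classical
  have hcov : (K : Set H) ⊆ ⋃ k : K, (fun h => (k : H)⁻¹ * h) ⁻¹' (V : Set H) := by
    intro g hg
    exact mem_iUnion.2 ⟨⟨g, hg⟩, by simp [V.one_mem]⟩
  obtain ⟨t, ht⟩ := hKc.elim_finite_subcover _
    (fun k : K => hVo.preimage (continuous_const.mul continuous_id)) hcov
  have key : ∀ a : H, (((a : H ⧸ V)).out)⁻¹ * a ∈ V := fun a =>
    QuotientGroup.eq.1 (QuotientGroup.out_eq' (a : H ⧸ V))
  refine ⟨t.image (fun k : K => (((k : H)) : H ⧸ V).out), ?_, ?_⟩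
  · intro δ hδ
    rw [Finset.mem_coe, Finset.mem_image] at hδ
    obtain ⟨k, hk, rfl⟩ := hδ
    have h2 : (k : H)⁻¹ * (((k : H)) : H ⧸ V).out ∈ V := by
      have := key (k : H)
      have h3 : ((((k : H)) : H ⧸ V).out : H ⧸ V) = (((k : H)) : H ⧸ V) :=
        QuotientGroup.out_eq' _
      exact QuotientGroup.eq.1 h3.symm
    have h6 := K.mul_mem k.2 (hVK h2)
    rw [mul_inv_cancel_left] at h6
    exact h6
  · intro g hg
    obtain ⟨k, hk, hgk⟩ : ∃ k ∈ t, (k : H)⁻¹ * g ∈ V := by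
      have := ht hg
      simp only [mem_iUnion, mem_preimage] at this
      obtain ⟨k, hk, hgk⟩ := this
      exact ⟨k, hk, hgk⟩
    have hmk : (((k : H)) : H ⧸ V) = (g : H ⧸ V) := QuotientGroup.eq.2 hgk
    have hDmem : (g : H ⧸ V).out ∈ t.image (fun k : K => (((k : H)) : H ⧸ V).out) := by
      have h0 : (fun k : K => (((k : H)) : H ⧸ V).out) k = (g : H ⧸ V).out := by
        simp only [hmk]
      exact h0 ▸ Finset.mem_image_of_mem _ hk
    refine ⟨(g : H ⧸ V).out, ⟨hDmem, key g⟩, ?_⟩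
    rintro δ ⟨hδD, hδV⟩
    obtain ⟨k', hk', rfl⟩ := Finset.mem_image.1 hδD
    have h4 : ((((k' : H)) : H ⧸ V).out : H ⧸ V) = (((k' : H)) : H ⧸ V) :=
      QuotientGroup.out_eq' _
    have h5 : (((k' : H)) : H ⧸ V) = (g : H ⧸ V) := by
      rw [← h4]; exact QuotientGroup.eq.2 hδV
    rw [h5]

/-- the cardinality of a left transversal equals the relative index. -/
lemma aux_transversal_card {V K : Subgroup H} {E : Finset H}
    (hEK : (E : Set H) ⊆ (K : Set H)) (hE : ∀ g ∈ K, ∃! e, e ∈ E ∧ e⁻¹ * g ∈ V) :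
    E.card = V.relIndex K := by
  have hrel : V.relIndex K = Nat.card (K ⧸ V.subgroupOf K) := rfl
  rw [hrel, ← Nat.card_eq_finsetCard]
  refine Nat.card_congr (Equiv.ofBijective
    (fun e => QuotientGroup.mk (⟨(e : H), hEK e.2⟩ : K)) ⟨?_, ?_⟩)
  · rintro ⟨e, he⟩ ⟨e', he'⟩ h
    have hV : ((⟨e, hEK he⟩ : K)⁻¹ * ⟨e', hEK he'⟩ : K) ∈ V.subgroupOf K := QuotientGroup.eq.1 h
    have hV' : e⁻¹ * e' ∈ V := hV
    obtain ⟨δ, _, huniq⟩ := hE e' (hEK he')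
    have h1 : e = δ := huniq e ⟨he, hV'⟩
    have h2 : e' = δ := huniq e' ⟨he', by simp [V.one_mem]⟩
    simp [Subtype.ext_iff, h1, h2]
  · rintro q
    obtain ⟨⟨g, hg⟩, rfl⟩ := QuotientGroup.mk_surjective q
    obtain ⟨e, ⟨heE, heV⟩, _⟩ := hE g hg
    refine ⟨⟨e, heE⟩, ?_⟩
    exact (QuotientGroup.eq.2 (show ((⟨e, hEK heE⟩ : K)⁻¹ * ⟨g, hg⟩ : K) ∈ V.subgroupOf K from heV))

end Trans

section Decomp
variable {H : Type*} [Group H]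

/-- decomposition of elements of `V ⊔ S` as `s * v` when `V` is normalized by `W ⊇ V, S`. -/
lemma aux_decomp {W V S : Subgroup H} (hVW : V ≤ W) (hSW : S ≤ W)
    (hnorm : ∀ w ∈ W, ∀ v ∈ V, w * v * w⁻¹ ∈ V) :
    ∀ g ∈ V ⊔ S, ∃ s ∈ S, ∃ v ∈ V, g = s * v := by
  have hconj : ∀ w ∈ W, ∀ v ∈ V, w⁻¹ * v * w ∈ V := by
    intro w hw v hv
    have := hnorm w⁻¹ (W.inv_mem hw) v hv
    simpa using this
  let P : Subgroup H :=
    { carrier := {g | ∃ s ∈ S, ∃ v ∈ V, g = s * v}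
      one_mem' := ⟨1, S.one_mem, 1, V.one_mem, by simp⟩
      mul_mem' := by
        rintro a b ⟨s, hs, v, hv, rfl⟩ ⟨s', hs', v', hv', rfl⟩
        refine ⟨s * s', S.mul_mem hs hs', (s'⁻¹ * v * s') * v',
          V.mul_mem (hconj s' (hSW hs') v hv) hv', ?_⟩
        group
      inv_mem' := by
        rintro a ⟨s, hs, v, hv, rfl⟩
        refine ⟨s⁻¹, S.inv_mem hs, s * v⁻¹ * s⁻¹, hnorm s (hSW hs) v⁻¹ (V.inv_mem hv), ?_⟩
        group }
  intro g hg
  have hle : V ⊔ S ≤ P := by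
    refine sup_le ?_ ?_
    · intro v hv; exact ⟨1, S.one_mem, v, hv, by simp⟩
    · intro s hs; exact ⟨s, hs, 1, V.one_mem, by simp⟩
  exact hle hg

end Decomp

section Ind
variable {X R : Type*} [TopologicalSpace X] [CommRing R]

lemma aux_lc_indicator {s : Set X} (hs : IsClopen s) (r : R) :
    IsLocallyConstant (s.indicator (fun _ => r)) := by
  intro t
  by_cases hr : r ∈ t <;> by_cases h0 : (0 : R) ∈ t
  · convert isOpen_univ
    ext z
    by_cases hz : z ∈ s <;> simp [Set.indicator_of_mem, Set.indicator_of_notMem, *]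
  · convert hs.2
    ext z
    by_cases hz : z ∈ s <;> simp [Set.indicator_of_mem, Set.indicator_of_notMem, *]
  · convert hs.compl.2
    ext z
    by_cases hz : z ∈ s <;> simp [Set.indicator_of_mem, Set.indicator_of_notMem, *]
  · convert isOpen_empty
    ext z
    by_cases hz : z ∈ s <;> simp [Set.indicator_of_mem, Set.indicator_of_notMem, *]

lemma aux_lc_support_closed {f : X → R} (hf : IsLocallyConstant f) :
    IsClosed (Function.support f) := by
  have h : Function.support f = (f ⁻¹' {0})ᶜ := by
    ext z; simp [Function.mem_support]
  rw [h]
  exact (hf {0}).isClosed_compl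

end Ind

section Bwd
variable {X H R : Type*} [TopologicalSpace X] [LocallyCompactSpace X] [T2Space X]
    [TotallyDisconnectedSpace X]
    [Group H] [TopologicalSpace H] [IsTopologicalGroup H]
    [CommRing R]

set_option linter.unusedSectionVars false

set_option maxHeartbeats 1000000 in
lemma aux_bwd
    (ρ : X → H → X)
    (hρcont : Continuous fun p : X × H => ρ p.1 p.2)
    (hρone : ∀ x, ρ x 1 = x)
    (hρmul : ∀ x g h, ρ (ρ x g) h = ρ x (g * h))
    (W V : Subgroup H) (hVW : V ≤ W)
    (hWc : IsCompact (W : Set H)) (hVo : IsOpen (V : Set H))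
    (φ : X → R) (hφlc : IsLocallyConstant φ) (hφsupp : IsCompact (Function.support φ))
    (hφW : ∀ w ∈ W, ∀ x, φ (ρ x w) = φ x)
    (Vx : X → Subgroup H) (hVVx : ∀ x, V ≤ Vx x) (hVxW : ∀ x, Vx x ≤ W)
    (hVxstab : ∀ x, ∀ w ∈ W, ρ x w = x → w ∈ Vx x)
    (r : X → R) (hr : ∀ x, φ x = (V.relIndex (Vx x) : R) * r x) :
    ∃ ψ : X → R, IsLocallyConstant ψ ∧ IsCompact (Function.support ψ) ∧
        (∀ v ∈ V, ∀ x, ψ (ρ x v) = ψ x) ∧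
        ∀ D : Finset H, (D : Set H) ⊆ (W : Set H) →
          (∀ w ∈ W, ∃! δ, δ ∈ D ∧ δ⁻¹ * w ∈ V) →
          ∀ x, φ x = ∑ γ ∈ D, ψ (ρ x γ) := by
  classical
  -- basic continuity and action facts
  have hcg : ∀ g : H, Continuous (fun z : X => ρ z g) :=
    fun g => hρcont.comp (continuous_id.prodMk continuous_const)
  have hcx : ∀ z : X, Continuous (fun g : H => ρ z g) :=
    fun z => hρcont.comp (continuous_const.prodMk continuous_id)
  have hcancel : ∀ (z : X) (g : H), ρ (ρ z g) g⁻¹ = z := fun z g => by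
    rw [hρmul, mul_inv_cancel, hρone]
  -- subgroup topology facts
  have hVxo : ∀ x, IsOpen ((Vx x : Set H)) := fun x => Subgroup.isOpen_mono (hVVx x) hVo
  have hVxcl : ∀ x, IsClosed ((Vx x : Set H)) :=
    fun x => Subgroup.isClosed_of_isOpen _ (hVxo x)
  have hVxc : ∀ x, IsCompact ((Vx x : Set H)) :=
    fun x => hWc.of_isClosed_subset (hVxcl x) (fun g hg => hVxW x hg)
  -- transversals of V inside Vx x
  choose E hE1 hE2 using fun x => aux_exists_transversal (hVVx x) (hVxc x) hVo
  have hcard : ∀ x, (E x).card = V.relIndex (Vx x) :=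
    fun x => aux_transversal_card (hE1 x) (hE2 x)
  -- Step 1: good neighborhoods
  have step1 : ∀ x : X, ∃ U : Set X, IsCompact U ∧ IsOpen U ∧ x ∈ U ∧
      (∀ u ∈ U, ∀ g ∈ Vx x, ρ u g ∈ U) ∧ (∀ u ∈ U, φ u = φ x) ∧
      (∀ u ∈ U, ∀ w ∈ W, ρ u w ∈ U → w ∈ Vx x) := by
    intro x
    set O : Set X := (fun g => ρ x g) '' (Vx x : Set H) with hOdef
    have hOc : IsCompact O := (hVxc x).image (hcx x)
    set C : Set H := (W : Set H) \ (Vx x : Set H) with hCdef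
    have hCc : IsCompact C := hWc.diff (hVxo x)
    set K : Set X := (fun g => ρ x g) '' C with hKdef
    have hKc : IsCompact K := hCc.image (hcx x)
    have hOK : ∀ z ∈ O, z ∉ K := by
      rintro z ⟨g, hg, rfl⟩ ⟨w, hw, heq⟩
      -- ρ x w = ρ x g, w ∈ C, g ∈ Vx x
      change ρ x w = ρ x g at heq
      have h1 : ρ x (w * g⁻¹) = x := by
        rw [← hρmul, heq, hcancel]
      have h2 : w * g⁻¹ ∈ W := W.mul_mem hw.1 (W.inv_mem (hVxW x hg))
      have h3 : w * g⁻¹ ∈ Vx x := hVxstab x _ h2 h1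
      have h4 : w ∈ Vx x := by
        have := (Vx x).mul_mem h3 hg
        simpa using this
      exact hw.2 h4
    have hΩo : IsOpen (φ ⁻¹' {φ x}) := hφlc {φ x}
    have hOΩ : O ⊆ φ ⁻¹' {φ x} := by
      rintro z ⟨g, hg, rfl⟩
      exact hφW g (hVxW x hg) x
    obtain ⟨A₁, hA₁c, hA₁cl, hOA₁, hA₁sub⟩ :=
      aux_exists_clopen hOc (hΩo.inter hKc.isClosed.isOpen_compl)
        (fun z hz => ⟨hOΩ hz, hOK z hz⟩)
    -- tube away from K
    obtain ⟨B₁, B₂, hB₁o, _, hOB₁, hCB₂, htube⟩ :=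
      generalized_tube_lemma hOc hCc (hA₁cl.compl.2.preimage hρcont)
        (by
          rintro ⟨z, w⟩ ⟨⟨g, hg, rfl⟩, hw⟩
          show ρ (ρ x g) w ∈ A₁ᶜ
          rw [hρmul]
          have hgw : g * w ∈ C := by
            constructor
            · exact W.mul_mem (hVxW x hg) hw.1
            · intro hmem
              exact hw.2 (by simpa using (Vx x).mul_mem ((Vx x).inv_mem hg) hmem)
          intro hmem
          exact (hA₁sub hmem).2 ⟨g * w, hgw, rfl⟩)
    obtain ⟨A₂, hA₂c, hA₂cl, hOA₂, hA₂sub⟩ :=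
      aux_exists_clopen hOc (hA₁cl.2.inter hB₁o) (fun z hz => ⟨hOA₁ hz, hOB₁ hz⟩)
    set U : Set X := ⋂ g ∈ (Vx x : Set H), (fun z => ρ z g) ⁻¹' A₂ with hUdef
    have hUmem : ∀ z, z ∈ U ↔ ∀ g ∈ (Vx x : Set H), ρ z g ∈ A₂ := fun z => mem_iInter₂
    have hUA₂ : U ⊆ A₂ := by
      intro z hz
      have := (hUmem z).1 hz 1 (Vx x).one_mem
      rwa [hρone] at this
    have hUclosed : IsClosed U :=
      isClosed_biInter (fun g _ => hA₂c.isClosed.preimage (hcg g))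
    have hxU : x ∈ U := (hUmem x).2 (fun g hg => hOA₂ ⟨g, hg, rfl⟩)
    have hUc : IsCompact U := hA₂c.of_isClosed_subset hUclosed hUA₂
    have hUo : IsOpen U := by
      rw [isOpen_iff_mem_nhds]
      intro z hz
      obtain ⟨u1, v1, hu1o, _, hzu1, hVv1, hsub1⟩ :=
        generalized_tube_lemma isCompact_singleton (hVxc x)
          (hA₂cl.2.preimage hρcont)
          (by
            rintro ⟨z', g⟩ ⟨hz', hg⟩
            simp only [mem_singleton_iff] at hz'
            subst hz'
            exact (hUmem z).1 hz g hg)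
      refine Filter.mem_of_superset (hu1o.mem_nhds (hzu1 rfl)) ?_
      intro z' hz'
      exact (hUmem z').2 (fun g hg => hsub1 (Set.mk_mem_prod hz' (hVv1 hg)))
    refine ⟨U, hUc, hUo, hxU, ?_, ?_, ?_⟩
    · intro u hu g hg
      refine (hUmem _).2 (fun h hh => ?_)
      rw [hρmul]
      exact (hUmem u).1 hu _ ((Vx x).mul_mem hg hh)
    · intro u hu
      exact (hA₁sub (hA₂sub (hUA₂ hu)).1).1
    · intro u hu w hw hmem
      by_contra hnVx
      have hwC : w ∈ C := ⟨hw, hnVx⟩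
      have : ρ u w ∈ A₁ᶜ :=
        htube (Set.mk_mem_prod ((hA₂sub (hUA₂ hu)).2) (hCB₂ hwC))
      exact this (hA₂sub (hUA₂ hmem)).1
  choose U hUc hUo hxU hUinv hUconst hUsep using step1
  -- tubes
  set T : X → Set X := fun x => {z | ∃ w ∈ (W : Set H), ρ z w ∈ U x} with hTdef
  have hUT : ∀ x, U x ⊆ T x := by
    intro x z hz
    exact ⟨1, W.one_mem, by rw [hρone]; exact hz⟩
  have hTo : ∀ x, IsOpen (T x) := by
    intro x
    have : T x = ⋃ w ∈ (W : Set H), (fun z => ρ z w) ⁻¹' U x := by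
      ext z; simp [hTdef]
    rw [this]
    exact isOpen_biUnion (fun w _ => (hUo x).preimage (hcg w))
  have hTc : ∀ x, IsCompact (T x) := by
    intro x
    have : T x = (fun p : X × H => ρ p.1 p.2) '' ((U x) ×ˢ (W : Set H)) := by
      ext z
      constructor
      · rintro ⟨w, hw, h⟩
        exact ⟨(ρ z w, w⁻¹), ⟨h, W.inv_mem hw⟩, hcancel z w⟩
      · rintro ⟨⟨u, w⟩, ⟨hu, hw⟩, rfl⟩
        exact ⟨w⁻¹, W.inv_mem hw, by rw [hcancel]; exact hu⟩
    rw [this]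
    exact ((hUc x).prod hWc).image hρcont
  have hTcl : ∀ x, IsClopen (T x) := fun x => ⟨(hTc x).isClosed, hTo x⟩
  have hTW : ∀ x, ∀ w ∈ W, ∀ z, (ρ z w ∈ T x ↔ z ∈ T x) := by
    intro x w hw z
    constructor
    · rintro ⟨w', hw', h⟩
      rw [hρmul] at h
      exact ⟨w * w', W.mul_mem hw hw', h⟩
    · rintro ⟨w', hw', h⟩
      refine ⟨w⁻¹ * w', W.mul_mem (W.inv_mem hw) hw', ?_⟩
      rw [hρmul, ← mul_assoc, mul_inv_cancel, one_mul]
      exact h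
  have hTconst : ∀ x, ∀ z ∈ T x, φ z = φ x := by
    rintro x z ⟨w, hw, h⟩
    rw [← hφW w hw z]
    exact hUconst x _ h
  -- counting lemma
  have count : ∀ x : X, ∀ D : Finset H, (D : Set H) ⊆ (W : Set H) →
      (∀ w ∈ W, ∃! δ, δ ∈ D ∧ δ⁻¹ * w ∈ V) → ∀ y,
      (y ∈ T x → (D.filter (fun γ => ρ y γ ∈ U x)).card = (E x).card) ∧
      (y ∉ T x → (D.filter (fun γ => ρ y γ ∈ U x)).card = 0) := by
    intro x D hDW hDtr y
    constructor
    · rintro ⟨w₁, hw₁, hu⟩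
      -- key equivalence
      have hiff : ∀ γ ∈ D, (ρ y γ ∈ U x ↔ w₁⁻¹ * γ ∈ Vx x) := by
        intro γ hγ
        have hγW : γ ∈ W := hDW hγ
        constructor
        · intro h
          have h2 : ρ (ρ y w₁) (w₁⁻¹ * γ) = ρ y γ := by
            rw [hρmul, mul_inv_cancel_left]
          exact hUsep x _ hu _ (W.mul_mem (W.inv_mem hw₁) hγW) (by rw [h2]; exact h)
        · intro h
          have h2 : ρ y γ = ρ (ρ y w₁) (w₁⁻¹ * γ) := by
            rw [hρmul, mul_inv_cancel_left]
          rw [h2]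
          exact hUinv x _ hu _ h
      refine Finset.card_bij
        (fun γ hγ => (hE2 x (w₁⁻¹ * γ)
          ((hiff γ (Finset.mem_filter.1 hγ).1).1 (Finset.mem_filter.1 hγ).2)).choose)
        ?_ ?_ ?_
      · intro γ hγ
        exact ((hE2 x (w₁⁻¹ * γ) ((hiff γ (Finset.mem_filter.1 hγ).1).1
          (Finset.mem_filter.1 hγ).2)).choose_spec.1).1
      · intro γ hγ γ' hγ' heq
        dsimp only at heq
        have key : ∀ (γ₀ : H) (h : w₁⁻¹ * γ₀ ∈ Vx x),
            γ₀⁻¹ * (w₁ * (hE2 x (w₁⁻¹ * γ₀) h).choose) ∈ V := by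
          intro γ₀ h
          have := V.inv_mem ((hE2 x (w₁⁻¹ * γ₀) h).choose_spec.1).2
          simpa [mul_assoc, mul_inv_rev] using this
        have hweW : w₁ * (hE2 x (w₁⁻¹ * γ)
            ((hiff γ (Finset.mem_filter.1 hγ).1).1 (Finset.mem_filter.1 hγ).2)).choose ∈ W :=
          W.mul_mem hw₁ (hVxW x (hE1 x ((hE2 x (w₁⁻¹ * γ)
            ((hiff γ (Finset.mem_filter.1 hγ).1).1
              (Finset.mem_filter.1 hγ).2)).choose_spec.1).1))
        obtain ⟨δ, _, hδu⟩ := hDtr _ hweW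
        have h1 : γ = δ := hδu γ ⟨(Finset.mem_filter.1 hγ).1,
          key γ ((hiff γ (Finset.mem_filter.1 hγ).1).1 (Finset.mem_filter.1 hγ).2)⟩
        have h2 : γ' = δ := by
          refine hδu γ' ⟨(Finset.mem_filter.1 hγ').1, ?_⟩
          rw [heq]
          exact key γ' ((hiff γ' (Finset.mem_filter.1 hγ').1).1 (Finset.mem_filter.1 hγ').2)
        rw [h1, h2]
      · intro e heE
        have hweW : w₁ * e ∈ W := W.mul_mem hw₁ (hVxW x (hE1 x heE))
        obtain ⟨γ, ⟨hγD, hγV⟩, _⟩ := hDtr (w₁ * e) hweW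
        have hγVx : w₁⁻¹ * γ ∈ Vx x := by
          have h3 : w₁⁻¹ * γ = e * (γ⁻¹ * (w₁ * e))⁻¹ := by group
          rw [h3]
          exact (Vx x).mul_mem (hE1 x heE) (hVVx x (V.inv_mem hγV))
        have hγF : γ ∈ D.filter (fun γ => ρ y γ ∈ U x) :=
          Finset.mem_filter.2 ⟨hγD, (hiff γ hγD).2 hγVx⟩
        refine ⟨γ, hγF, ?_⟩
        have hspec := (hE2 x (w₁⁻¹ * γ) hγVx).choose_spec
        have heV : e⁻¹ * (w₁⁻¹ * γ) ∈ V := by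
          have := V.inv_mem hγV
          simpa [mul_inv_rev, mul_assoc] using this
        exact (hspec.2 e ⟨heE, heV⟩).symm
    · intro hyT
      rw [Finset.card_eq_zero, Finset.filter_eq_empty_iff]
      intro γ hγ h
      exact hyT ⟨γ, hDW hγ, h⟩
  -- clopen unions of tubes
  have hLT : ∀ L : List X, IsClopen (⋃ x ∈ L, T x) := by
    intro L
    induction L with
    | nil => simpa using isClopen_empty
    | cons a l ih =>
      have h : (⋃ x ∈ (a :: l), T x) = T a ∪ ⋃ x ∈ l, T x := by
        ext z
        simp [List.mem_cons, or_and_right, exists_or]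
      rw [h]
      exact (hTcl a).union ih
  have hLTW : ∀ (L : List X) (w : H), w ∈ W → ∀ z,
      (ρ z w ∈ ⋃ x ∈ L, T x ↔ z ∈ ⋃ x ∈ L, T x) := by
    intro L w hw z
    simp only [mem_iUnion, exists_prop]
    constructor
    · rintro ⟨x, hxL, hx⟩
      exact ⟨x, hxL, (hTW x w hw z).1 hx⟩
    · rintro ⟨x, hxL, hx⟩
      exact ⟨x, hxL, (hTW x w hw z).2 hx⟩
  have hUiff : ∀ (x : X) (v : H), v ∈ V → ∀ z, (ρ z v ∈ U x ↔ z ∈ U x) := by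
    intro x v hv z
    constructor
    · intro h
      have := hUinv x _ h v⁻¹ ((Vx x).inv_mem (hVVx x hv))
      rwa [hcancel] at this
    · intro h
      exact hUinv x z h v (hVVx x hv)
  -- main induction
  have main : ∀ L : List X, ∃ ψ : X → R, IsLocallyConstant ψ ∧
      IsCompact (Function.support ψ) ∧ (∀ v ∈ V, ∀ z, ψ (ρ z v) = ψ z) ∧
      ∀ D : Finset H, (D : Set H) ⊆ (W : Set H) →
        (∀ w ∈ W, ∃! δ, δ ∈ D ∧ δ⁻¹ * w ∈ V) → ∀ y,
        (y ∈ (⋃ x ∈ L, T x) → (∑ γ ∈ D, ψ (ρ y γ)) = φ y) ∧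
        (y ∉ (⋃ x ∈ L, T x) → (∑ γ ∈ D, ψ (ρ y γ)) = 0) := by
    intro L
    induction L with
    | nil =>
      refine ⟨0, IsLocallyConstant.const 0, ?_, ?_, ?_⟩
      · convert isCompact_empty
        ext z; simp
      · intro v hv z; rfl
      · intro D hDW hDtr y
        constructor
        · intro hy; simp at hy
        · intro _; simp
    | cons a l ih =>
      obtain ⟨ψ', h1, h2, h3, h4⟩ := ih
      have hTL'cl : IsClopen (⋃ x ∈ l, T x) := hLT l
      set Cs : Set X := U a ∩ (⋃ x ∈ l, T x)ᶜ with hCsdef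
      have hUacl : IsClopen (U a) := ⟨(hUc a).isClosed, hUo a⟩
      have hCscl : IsClopen Cs := hUacl.inter hTL'cl.compl
      have hCsc : IsCompact Cs := (hUc a).inter_right hTL'cl.compl.1
      have hcons : ∀ y : X, (y ∈ ⋃ x ∈ (a :: l), T x) ↔ y ∈ T a ∨ y ∈ ⋃ x ∈ l, T x := by
        intro y; simp [List.mem_cons, or_and_right, exists_or]
      refine ⟨ψ' + Cs.indicator (fun _ => r a),
        h1.add (aux_lc_indicator hCscl (r a)), ?_, ?_, ?_⟩
      · refine IsCompact.of_isClosed_subset (h2.union hCsc)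
          (aux_lc_support_closed (h1.add (aux_lc_indicator hCscl (r a)))) ?_
        refine (Function.support_add _ _).trans (union_subset_union subset_rfl ?_)
        intro z hz
        by_contra hc
        exact hz (Set.indicator_of_notMem hc _)
      · intro v hv z
        have e1 : ψ' (ρ z v) = ψ' z := h3 v hv z
        have e2 : Cs.indicator (fun _ => r a) (ρ z v) = Cs.indicator (fun _ => r a) z := by
          have hmem : ρ z v ∈ Cs ↔ z ∈ Cs := by
            have hU := hUiff a v hv z
            have hT := hLTW l v (hVW hv) z
            constructor
            · rintro ⟨hu, ht⟩; exact ⟨hU.1 hu, fun hc => ht (hT.2 hc)⟩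
            · rintro ⟨hu, ht⟩; exact ⟨hU.2 hu, fun hc => ht (hT.1 hc)⟩
          by_cases hz : z ∈ Cs
          · rw [Set.indicator_of_mem hz, Set.indicator_of_mem (hmem.2 hz)]
          · rw [Set.indicator_of_notMem hz,
              Set.indicator_of_notMem (fun hc => hz (hmem.1 hc))]
        simp only [Pi.add_apply, e1, e2]
      · intro D hDW hDtr y
        have hsplit : (∑ γ ∈ D, (ψ' + Cs.indicator (fun _ => r a)) (ρ y γ)) =
            (∑ γ ∈ D, ψ' (ρ y γ)) + ∑ γ ∈ D, Cs.indicator (fun _ => r a) (ρ y γ) := by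
          simp only [Pi.add_apply]
          exact Finset.sum_add_distrib
        by_cases hy' : y ∈ ⋃ x ∈ l, T x
        · have hind : ∀ γ ∈ D, Cs.indicator (fun _ => r a) (ρ y γ) = 0 := by
            intro γ hγ
            refine Set.indicator_of_notMem (fun hc => ?_) _
            exact hc.2 ((hLTW l γ (hDW hγ) y).2 hy')
          constructor
          · intro _
            rw [hsplit, (h4 D hDW hDtr y).1 hy', Finset.sum_eq_zero hind, add_zero]
          · intro hc
            exact absurd ((hcons y).2 (Or.inr hy')) hc
        · have hind : (∑ γ ∈ D, Cs.indicator (fun _ => r a) (ρ y γ)) =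
              ((D.filter (fun γ => ρ y γ ∈ U a)).card : R) * r a := by
            have hterm : ∀ γ ∈ D, Cs.indicator (fun _ => r a) (ρ y γ) =
                if ρ y γ ∈ U a then r a else 0 := by
              intro γ hγ
              by_cases h : ρ y γ ∈ U a
              · rw [if_pos h]
                have hmem : ρ y γ ∈ Cs := ⟨h, fun hc => hy' ((hLTW l γ (hDW hγ) y).1 hc)⟩
                exact Set.indicator_of_mem hmem _
              · rw [if_neg h]
                exact Set.indicator_of_notMem (fun hc => h hc.1) _
            rw [Finset.sum_congr rfl hterm, ← Finset.sum_filter, Finset.sum_const,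
              nsmul_eq_mul]
          by_cases hy : y ∈ T a
          · have hcount := (count a D hDW hDtr y).1 hy
            constructor
            · intro _
              rw [hsplit, (h4 D hDW hDtr y).2 hy', hind, hcount, hcard a, zero_add,
                ← hr a]
              exact (hTconst a y hy).symm
            · intro hc
              exact absurd ((hcons y).2 (Or.inl hy)) hc
          · have hcount := (count a D hDW hDtr y).2 hy
            constructor
            · intro hc
              rcases (hcons y).1 hc with h | h
              · exact absurd h hy
              · exact absurd h hy'
            · intro _
              rw [hsplit, (h4 D hDW hDtr y).2 hy', hind, hcount, zero_add]
              simp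
  -- final assembly
  have hcover : Function.support φ ⊆ ⋃ x : X, U x := fun z _ => mem_iUnion.2 ⟨z, hxU z⟩
  obtain ⟨t, ht⟩ := hφsupp.elim_finite_subcover U hUo hcover
  obtain ⟨ψ, hψ1, hψ2, hψ3, hψ4⟩ := main t.toList
  refine ⟨ψ, hψ1, hψ2, hψ3, ?_⟩
  intro D hDW hDtr y
  by_cases hy : y ∈ ⋃ x ∈ t.toList, T x
  · exact ((hψ4 D hDW hDtr y).1 hy).symm
  · rw [(hψ4 D hDW hDtr y).2 hy]
    by_contra hne
    have hys : y ∈ Function.support φ := hne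
    obtain ⟨x, hxt, hyU⟩ := mem_iUnion₂.1 (ht hys)
    exact hy (Set.mem_biUnion (Finset.mem_toList.2 hxt) (hUT x hyU))

end Bwd

/-- The stabilizer, as a subgroup of `H`, of a point `x` under a right action `ρ` of `H`. -/
def rightStabilizer {X H : Type*} [Group H] (ρ : X → H → X)
    (hone : ∀ x, ρ x 1 = x) (hmul : ∀ x g h, ρ (ρ x g) h = ρ x (g * h)) (x : X) :
    Subgroup H where
  carrier := {h | ρ x h = x}
  one_mem' := hone x
  mul_mem' := by
    intro a b ha hb
    simp only [Set.mem_setOf_eq] at *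
    rw [← hmul, ha, hb]
  inv_mem' := by
    intro a ha
    simp only [Set.mem_setOf_eq] at *
    have h := hmul x a a⁻¹
    rw [ha, mul_inv_cancel, hone] at h
    exact h

/-- Trace criterion in Schwartz spaces: a `W`-invariant locally constant compactly supported
function `φ : X → R` is the trace `Σ_{γ ∈ W/V} γ·ψ` of a `V`-invariant one if and only if
`φ(x) ∈ [V_x : V]·R` for every `x` in the support of `φ`, where `V_x = ⟨V, Stab_W(x)⟩`. -/
theorem trace_criterion_schwartz
    {X H R : Type*} [TopologicalSpace X] [LocallyCompactSpace X] [T2Space X]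
    [TotallyDisconnectedSpace X]
    [Group H] [TopologicalSpace H] [IsTopologicalGroup H]
    [LocallyCompactSpace H] [TotallyDisconnectedSpace H]
    [CommRing R] [IsDomain R]
    (ρ : X → H → X)
    (hρcont : Continuous fun p : X × H => ρ p.1 p.2)
    (hρone : ∀ x, ρ x 1 = x)
    (hρmul : ∀ x g h, ρ (ρ x g) h = ρ x (g * h))
    (W V : Subgroup H) (hVW : V ≤ W)
    (hWc : IsCompact (W : Set H)) (hWo : IsOpen (W : Set H))
    (hVc : IsCompact (V : Set H)) (hVo : IsOpen (V : Set H))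
    (hnorm : ∀ w ∈ W, ∀ v ∈ V, w * v * w⁻¹ ∈ V)
    (φ : X → R) (hφlc : IsLocallyConstant φ) (hφsupp : IsCompact (Function.support φ))
    (hφW : ∀ w ∈ W, ∀ x, φ (ρ x w) = φ x) :
    (∃ ψ : X → R, IsLocallyConstant ψ ∧ IsCompact (Function.support ψ) ∧
        (∀ v ∈ V, ∀ x, ψ (ρ x v) = ψ x) ∧
        ∀ D : Finset H, (D : Set H) ⊆ (W : Set H) →
          (∀ w ∈ W, ∃! δ, δ ∈ D ∧ δ⁻¹ * w ∈ V) →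
          ∀ x, φ x = ∑ γ ∈ D, ψ (ρ x γ)) ↔
      ∀ x ∈ Function.support φ, ∃ r : R,
        φ x = (V.relIndex (V ⊔ (W ⊓ rightStabilizer ρ hρone hρmul x)) : R) * r := by
  classical
  constructor
  · rintro ⟨ψ, hψlc, hψsupp, hψV, hψD⟩ x _
    set S : Subgroup H := W ⊓ rightStabilizer ρ hρone hρmul x with hSdef
    set Vx : Subgroup H := V ⊔ S with hVxdef
    have hSW : S ≤ W := inf_le_left
    have hVVx : V ≤ Vx := le_sup_left
    have hVxW : Vx ≤ W := sup_le hVW hSW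
    have hVxo : IsOpen (Vx : Set H) := Subgroup.isOpen_mono hVVx hVo
    have hVxcl : IsClosed (Vx : Set H) := Subgroup.isClosed_of_isOpen _ hVxo
    have hVxc : IsCompact (Vx : Set H) :=
      hWc.of_isClosed_subset hVxcl (fun g hg => hVxW hg)
    have hstab : ∀ s ∈ S, ρ x s = x := fun s hs => hs.2
    obtain ⟨E, hE1, hE2⟩ := aux_exists_transversal (V := V) (K := Vx) hVVx hVxc hVo
    obtain ⟨F, hF1, hF2⟩ := aux_exists_transversal (V := Vx) (K := W) hVxW hWc hVxo
    set D : Finset H := (E ×ˢ F).image (fun p => p.1 * p.2⁻¹) with hDdef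
    have hmemD : ∀ δ ∈ D, ∃ e ∈ E, ∃ f ∈ F, δ = e * f⁻¹ := by
      intro δ hδ
      obtain ⟨p, hp, rfl⟩ := Finset.mem_image.1 hδ
      obtain ⟨hp1, hp2⟩ := Finset.mem_product.1 hp
      exact ⟨p.1, hp1, p.2, hp2, rfl⟩
    have hDW : (D : Set H) ⊆ (W : Set H) := by
      intro δ hδ
      obtain ⟨e, he, f, hf, rfl⟩ := hmemD δ hδ
      exact W.mul_mem (hVxW (hE1 he)) (W.inv_mem (hF1 hf))
    have hDtrans : ∀ w ∈ W, ∃! δ, δ ∈ D ∧ δ⁻¹ * w ∈ V := by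
      intro w hw
      obtain ⟨f, ⟨hfF, hf⟩, hfu⟩ := hF2 w⁻¹ (W.inv_mem hw)
      have hg : w * f ∈ Vx := by
        have := Vx.inv_mem hf
        simpa [mul_inv_rev] using this
      obtain ⟨e, ⟨heE, he⟩, heu⟩ := hE2 (w * f) hg
      have hfW : f ∈ W := hF1 hfF
      refine ⟨e * f⁻¹, ⟨?_, ?_⟩, ?_⟩
      · exact Finset.mem_image.2 ⟨(e, f), Finset.mem_product.2 ⟨heE, hfF⟩, rfl⟩
      · have heq : (e * f⁻¹)⁻¹ * w = f * (e⁻¹ * (w * f)) * f⁻¹ := by group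
        rw [heq]
        exact hnorm f hfW _ he
      · rintro δ ⟨hδD, hδV⟩
        obtain ⟨e', he'E, f', hf'F, rfl⟩ := hmemD δ hδD
        have hf'W : f' ∈ W := hF1 hf'F
        set v : H := f' * e'⁻¹ * w with hvdef
        have hv : v ∈ V := by
          have heq : (e' * f'⁻¹)⁻¹ * w = f' * e'⁻¹ * w := by group
          rw [heq] at hδV; exact hδV
        have hwf' : w * f' ∈ Vx := by
          have heq : w * f' = e' * (f'⁻¹ * v * f') := by rw [hvdef]; group
          rw [heq]
          refine Vx.mul_mem (hE1 he'E) (hVVx ?_)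
          have := hnorm f'⁻¹ (W.inv_mem hf'W) v hv
          simpa using this
        have hff : f' = f := by
          refine hfu f' ⟨hf'F, ?_⟩
          have := Vx.inv_mem hwf'
          simpa [mul_inv_rev] using this
        subst hff
        have hee : e' = e := by
          refine heu e' ⟨he'E, ?_⟩
          have heq : e'⁻¹ * (w * f') = f'⁻¹ * v * f' := by rw [hvdef]; group
          rw [heq]
          have := hnorm f'⁻¹ (W.inv_mem hf'W) v hv
          simpa using this
        rw [hee]
    have hsum := hψD D hDW hDtrans x
    have hinj : ∀ p ∈ E ×ˢ F, ∀ q ∈ E ×ˢ F,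
        p.1 * p.2⁻¹ = q.1 * q.2⁻¹ → p = q := by
      rintro ⟨e, f⟩ hp ⟨e', f'⟩ hq h
      obtain ⟨he, hf⟩ := Finset.mem_product.1 hp
      obtain ⟨he', hf'⟩ := Finset.mem_product.1 hq
      simp only at h
      obtain ⟨f₀, ⟨hf₀F, hf₀⟩, hf₀u⟩ := hF2 f (hF1 hf)
      have h1 : f = f₀ := hf₀u f ⟨hf, by simp [Vx.one_mem]⟩
      have h2 : f' = f₀ := by
        refine hf₀u f' ⟨hf', ?_⟩
        have heq : f'⁻¹ * f = e'⁻¹ * e := by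
          have : e' = e * f⁻¹ * f' := by rw [h]; group
          rw [this]; group
        rw [heq]
        exact Vx.mul_mem (Vx.inv_mem (hE1 he')) (hE1 he)
      have hf'' : f = f' := h1.trans h2.symm
      subst hf''
      have : e = e' := by
        have := mul_right_cancel h
        exact this
      simp [this]
    rw [Finset.sum_image hinj, Finset.sum_product] at hsum
    have hterm : ∀ e ∈ E, ∀ f ∈ F, ψ (ρ x (e * f⁻¹)) = ψ (ρ x f⁻¹) := by
      intro e heE f hfF
      have hfW : f ∈ W := hF1 hfF
      obtain ⟨s, hs, v, hv, rfl⟩ := aux_decomp hVW hSW hnorm e (hE1 heE)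
      have h1 : ρ x (s * v * f⁻¹) = ρ x (v * f⁻¹) := by
        have := hρmul x s (v * f⁻¹)
        rw [hstab s hs] at this
        rw [mul_assoc]
        exact this.symm
      have h2 : v * f⁻¹ = f⁻¹ * (f * v * f⁻¹) := by group
      have h3 : ρ x (v * f⁻¹) = ρ (ρ x f⁻¹) (f * v * f⁻¹) := by
        rw [hρmul, ← h2]
      rw [h1, h3, hψV _ (hnorm f hfW v hv)]
    rw [Finset.sum_congr rfl (fun e he => Finset.sum_congr rfl (fun f hf => hterm e he f hf))]
      at hsum
    rw [Finset.sum_const] at hsum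
    refine ⟨∑ f ∈ F, ψ (ρ x f⁻¹), ?_⟩
    rw [hsum, ← aux_transversal_card hE1 hE2, nsmul_eq_mul]
  · intro hyp
    have hyp' : ∀ x : X, ∃ r : R,
        φ x = (V.relIndex (V ⊔ (W ⊓ rightStabilizer ρ hρone hρmul x)) : R) * r := by
      intro x
      by_cases hx : x ∈ Function.support φ
      · exact hyp x hx
      · exact ⟨0, by rw [Function.notMem_support.1 hx, mul_zero]⟩
    choose r hr using hyp'
    exact aux_bwd ρ hρcont hρone hρmul W V hVW hWc hVo φ hφlc hφsupp hφW
      (fun x => V ⊔ (W ⊓ rightStabilizer ρ hρone hρmul x))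
      (fun x => le_sup_left) (fun x => sup_le hVW inf_le_left)
      (fun x w hw hfix => Subgroup.mem_sup_right (Subgroup.mem_inf.2 ⟨hw, hfix⟩))
      r hr
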